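/- Let p be an odd prime and D a squarefree integer with p ∤ D. For every z ∈ ℤ[√D] with N(z) ≡ 1 (mod p), one has z^{p − (D/p)} ≡ 1 (mod p), where (D/p) is the Legendre symbol (so the exponent is p − 1 if D is a quadratic residue mod p and p + 1 if it is a non-residue). -/
import Mathlib

set_option maxHeartbeats 1000000
set_option synthInstance.maxHeartbeats 400000


/-- Proposition 5.2: any norm-one element `z` of `ℤ[√D]` modulo an odd prime `p`
satisfies `z^(p − (D/p)) ≡ 1 (mod p)`. -/
theorem stmt_8 (p : ℕ) [Fact p.Prime] (hpodd : Odd p)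
    (D : ℤ) (hD : Squarefree D) (hpD : ¬ (p : ℤ) ∣ D)
    (z : Zsqrtd D) (hz : (p : ℤ) ∣ (z.norm - 1)) :
    (p : Zsqrtd D) ∣ (z ^ ((p : ℤ) - legendreSym p D).toNat - 1) := by
  have hp : p.Prime := Fact.out
  set I : Ideal (Zsqrtd D) := Ideal.span {(p : Zsqrtd D)} with hI
  set f : Zsqrtd D →+* (Zsqrtd D ⧸ I) := Ideal.Quotient.mk I with hf
  have hdvd : ∀ x : Zsqrtd D, f x = 0 ↔ (p : Zsqrtd D) ∣ x := by
    intro x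
    rw [hf, Ideal.Quotient.eq_zero_iff_mem, hI, Ideal.mem_span_singleton]
  have hint : ∀ n : ℤ, (p : ℤ) ∣ n → f ((n : ℤ) : Zsqrtd D) = 0 := by
    intro n hn
    rw [hdvd]
    rw [show ((p : ℕ) : Zsqrtd D) = (((p : ℤ) : ℤ) : Zsqrtd D) by push_cast; ring,
      Zsqrtd.intCast_dvd]
    simpa using hn
  have hIne : I ≠ ⊤ := by
    intro h
    have h1 : (1 : Zsqrtd D) ∈ I := h ▸ Submodule.mem_top
    rw [hI, Ideal.mem_span_singleton,
      show ((p : ℕ) : Zsqrtd D) = (((p : ℤ) : ℤ) : Zsqrtd D) by push_cast; ring,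
      Zsqrtd.intCast_dvd] at h1
    have h2 := Int.eq_one_of_dvd_one (Int.natCast_nonneg p) (by simpa using h1.1)
    have := hp.two_le
    omega
  haveI : Nontrivial (Zsqrtd D ⧸ I) := Ideal.Quotient.nontrivial_iff.mpr hIne
  haveI : CharP (Zsqrtd D ⧸ I) p := by
    rw [CharP.charP_iff_prime_eq_zero hp]
    have := hint p (dvd_refl _)
    simpa using this
  -- basic quantities
  set a : ℤ := z.re
  set b : ℤ := z.im
  set s : Zsqrtd D ⧸ I := f Zsqrtd.sqrtd with hs
  have hzdec : f z = ((a : ℤ) : Zsqrtd D ⧸ I) + s * ((b : ℤ) : Zsqrtd D ⧸ I) := by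
    have : z = (⟨a, b⟩ : Zsqrtd D) := rfl
    rw [this, Zsqrtd.decompose, map_add, map_mul, map_intCast, map_intCast]
  have hstardec : f (star z) = ((a : ℤ) : Zsqrtd D ⧸ I) - s * ((b : ℤ) : Zsqrtd D ⧸ I) := by
    have : star z = (⟨a, -b⟩ : Zsqrtd D) := by
      rw [show z = (⟨a, b⟩ : Zsqrtd D) from rfl, Zsqrtd.star_mk]
    rw [this, Zsqrtd.decompose, map_add, map_mul, map_intCast, map_intCast]
    push_cast
    ring
  have hs2 : s * s = ((D : ℤ) : Zsqrtd D ⧸ I) := by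
    rw [hs, ← map_mul, Zsqrtd.dmuld, map_intCast]
  -- Fermat for integer casts
  have hfermat : ∀ n : ℤ, ((n : ℤ) : Zsqrtd D ⧸ I) ^ p = ((n : ℤ) : Zsqrtd D ⧸ I) := by
    intro n
    have h1 : (p : ℤ) ∣ n ^ p - n := by
      have : ((n ^ p - n : ℤ) : ZMod p) = 0 := by
        push_cast
        rw [ZMod.pow_card]
        ring
      exact (ZMod.intCast_zmod_eq_zero_iff_dvd _ _).mp this
    have := hint _ h1
    rw [show ((n ^ p - n : ℤ) : Zsqrtd D) = ((n : ℤ) : Zsqrtd D) ^ p - ((n : ℤ) : Zsqrtd D) by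
        push_cast; ring,
      map_sub, map_pow, map_intCast, sub_eq_zero] at this
    exact this
  -- legendre symbol as power
  have hleg : ((D : ℤ) : Zsqrtd D ⧸ I) ^ (p / 2) = ((legendreSym p D : ℤ) : Zsqrtd D ⧸ I) := by
    have h1 : (p : ℤ) ∣ D ^ (p / 2) - legendreSym p D := by
      have : ((D ^ (p / 2) - legendreSym p D : ℤ) : ZMod p) = 0 := by
        push_cast
        rw [← legendreSym.eq_pow]
        ring
      exact (ZMod.intCast_zmod_eq_zero_iff_dvd _ _).mp this
    have := hint _ h1
    rw [show ((D ^ (p / 2) - legendreSym p D : ℤ) : Zsqrtd D)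
          = ((D : ℤ) : Zsqrtd D) ^ (p / 2) - ((legendreSym p D : ℤ) : Zsqrtd D) by
        push_cast; ring,
      map_sub, map_pow, map_intCast, sub_eq_zero] at this
    exact this
  -- key Frobenius computation
  have hps : p = 2 * (p / 2) + 1 := by
    obtain ⟨k, hk⟩ := hpodd; omega
  have hsp : s ^ p = ((legendreSym p D : ℤ) : Zsqrtd D ⧸ I) * s := by
    have h2 : s ^ p = (s ^ 2) ^ (p / 2) * s := by
      conv_lhs => rw [hps]
      rw [pow_succ, pow_mul]
    rw [h2, sq, hs2, hleg]
  have hfrob : f z ^ p =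
      ((a : ℤ) : Zsqrtd D ⧸ I) +
        ((legendreSym p D : ℤ) : Zsqrtd D ⧸ I) * (s * ((b : ℤ) : Zsqrtd D ⧸ I)) := by
    rw [hzdec, add_pow_char, mul_pow, hfermat, hfermat, hsp]
    ring
  -- z is invertible mod p
  have hnorm1 : f ((z.norm : ℤ) : Zsqrtd D) = 1 := by
    have := hint _ hz
    rw [show ((z.norm - 1 : ℤ) : Zsqrtd D) = ((z.norm : ℤ) : Zsqrtd D) - 1 by push_cast; ring,
      map_sub, map_one, sub_eq_zero] at this
    exact this
  have hunit : f z * f (star z) = 1 := by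
    rw [← map_mul, ← Zsqrtd.norm_eq_mul_conj, hnorm1]
  -- case split on the Legendre symbol
  have hDp : ((D : ℤ) : ZMod p) ≠ 0 := by
    intro h0
    exact hpD ((ZMod.intCast_zmod_eq_zero_iff_dvd D p).mp h0)
  have hp2 : 2 ≤ p := hp.two_le
  rcases legendreSym.eq_one_or_neg_one p hDp with h1 | h1
  · -- residue case: exponent p - 1
    have he : ((p : ℤ) - legendreSym p D).toNat = p - 1 := by
      rw [h1]; omega
    rw [he, ← hdvd, map_sub, map_one, map_pow, sub_eq_zero]
    have hzp : f z ^ p = f z := by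
      rw [hfrob, h1, hzdec]; push_cast; ring
    have : f z ^ (p - 1) * (f z * f (star z)) = f z * f (star z) := by
      rw [← mul_assoc, ← pow_succ, show p - 1 + 1 = p by omega, hzp]
    rwa [hunit, mul_one] at this
  · -- non-residue case: exponent p + 1
    have he : ((p : ℤ) - legendreSym p D).toNat = p + 1 := by
      rw [h1]; omega
    rw [he, ← hdvd, map_sub, map_one, map_pow, sub_eq_zero]
    have hzp : f z ^ p = f (star z) := by
      rw [hfrob, h1, hstardec]; push_cast; ring
    rw [pow_succ, hzp, mul_comm, hunit]
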